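/- arXiv:2206.11361 — 4 statements merged into one kernel-verified Lean document; each statement's English description precedes it below -/
import Mathlib

section
/- For any real number a > 0, the function z ↦ Γ(z+a)/Γ(z) is non-decreasing on (0, ∞), i.e., for all 0 < z₁ ≤ z₂ one has Γ(z₁+a)/Γ(z₁) ≤ Γ(z₂+a)/Γ(z₂). -/
theorem gamma_ratio_monotone (a : ℝ) (ha : 0 < a) :
    ∀ z₁ z₂ : ℝ, 0 < z₁ → z₁ ≤ z₂ →
      Real.Gamma (z₁ + a) / Real.Gamma z₁ ≤ Real.Gamma (z₂ + a) / Real.Gamma z₂ := by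
  intro z₁ z₂ hz₁ hle
  have hz₂ : 0 < z₂ := lt_of_lt_of_le hz₁ hle
  have hf := Real.convexOn_log_Gamma
  set f : ℝ → ℝ := Real.log ∘ Real.Gamma with hfdef
  have h1 : z₁ ∈ Set.Ioi (0:ℝ) := hz₁
  have h2 : z₂ ∈ Set.Ioi (0:ℝ) := hz₂
  have h1a : z₁ + a ∈ Set.Ioi (0:ℝ) := by simp [Set.mem_Ioi]; linarith
  have h2a : z₂ + a ∈ Set.Ioi (0:ℝ) := by simp [Set.mem_Ioi]; linarith
  -- slope (z₁, z₁+a) ≤ slope (z₁, z₂+a)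
  have s1 : (f (z₁ + a) - f z₁) / (z₁ + a - z₁) ≤ (f (z₂ + a) - f z₁) / (z₂ + a - z₁) :=
    hf.secant_mono h1 h1a h2a (by linarith) (by linarith) (by linarith)
  -- slope (z₁, z₂+a) ≤ slope (z₂, z₂+a)
  have s2 : (f z₁ - f (z₂ + a)) / (z₁ - (z₂ + a)) ≤ (f z₂ - f (z₂ + a)) / (z₂ - (z₂ + a)) :=
    hf.secant_mono h2a h1 h2 (by linarith) (by linarith) hle
  have s2' : (f (z₂ + a) - f z₁) / (z₂ + a - z₁) ≤ (f (z₂ + a) - f z₂) / (z₂ + a - z₂) := by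
    rw [show f z₁ - f (z₂ + a) = -(f (z₂ + a) - f z₁) by ring,
        show z₁ - (z₂ + a) = -(z₂ + a - z₁) by ring,
        show f z₂ - f (z₂ + a) = -(f (z₂ + a) - f z₂) by ring,
        show z₂ - (z₂ + a) = -(z₂ + a - z₂) by ring, neg_div_neg_eq, neg_div_neg_eq] at s2
    exact s2
  have key : f (z₁ + a) - f z₁ ≤ f (z₂ + a) - f z₂ := by
    have := le_trans s1 s2'
    rw [show z₁ + a - z₁ = a by ring, show z₂ + a - z₂ = a by ring] at this
    exact (div_le_div_iff_of_pos_right ha).mp this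
  have gp1 := Real.Gamma_pos_of_pos hz₁
  have gp2 := Real.Gamma_pos_of_pos hz₂
  have gp1a := Real.Gamma_pos_of_pos (show (0:ℝ) < z₁ + a by linarith)
  have gp2a := Real.Gamma_pos_of_pos (show (0:ℝ) < z₂ + a by linarith)
  have e1 : Real.Gamma (z₁ + a) / Real.Gamma z₁ = Real.exp (f (z₁ + a) - f z₁) := by
    simp [hfdef, Real.exp_sub, Real.exp_log gp1a, Real.exp_log gp1]
  have e2 : Real.Gamma (z₂ + a) / Real.Gamma z₂ = Real.exp (f (z₂ + a) - f z₂) := by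
    simp [hfdef, Real.exp_sub, Real.exp_log gp2a, Real.exp_log gp2]
  rw [e1, e2]
  exact Real.exp_le_exp.mpr key
end

section
/- Let n ≥ 2 and let A_n be the set of exponent vectors appearing in the expansion x₁ ∏_{k=2}^n (x_k + x_{k-1}) = Σ_{a ∈ A_n} ∏_j x_j^{a_j}. Then every a ∈ A_n satisfies a_i + a_{i+1} ∈ {1,2,3} for i = 2,…,n-2, a₁ + a₂ ∈ {2,3}, and a_{n-1} + a_n ∈ {1,2}. -/
def expA : ℕ → Finset (List ℕ)
  | 0 => ∅
  | 1 => ∅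
  | 2 => {[2, 0], [1, 1]}
  | (n + 3) =>
      (expA (n + 2)).image (fun a => a.dropLast ++ [a.getLastD 0 + 1, 0]) ∪
      (expA (n + 2)).image (fun a => a ++ [1])

lemma getD_dropLast' (l : List ℕ) (i : ℕ) (h : i + 1 < l.length) :
    l.dropLast.getD i 0 = l.getD i 0 := by
  rw [List.getD_eq_getElem?_getD, List.getD_eq_getElem?_getD, List.getElem?_dropLast,
    if_pos (by omega)]

lemma getLastD_eq' (l : List ℕ) : l.getLastD 0 = l.getD (l.length - 1) 0 := by
  rw [List.getLastD_eq_getLast?, List.getLast?_eq_getElem?, List.getD_eq_getElem?_getD]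

lemma expA_aux (n : ℕ) : ∀ a ∈ expA (n + 2),
    a.length = n + 2 ∧ a.getD (n + 1) 0 ≤ 1 ∧
    (∀ i, 2 ≤ i → i ≤ n →
      (a.getD (i - 1) 0 + a.getD i 0 = 1 ∨ a.getD (i - 1) 0 + a.getD i 0 = 2 ∨
        a.getD (i - 1) 0 + a.getD i 0 = 3)) ∧
    (a.getD 0 0 + a.getD 1 0 = 2 ∨ a.getD 0 0 + a.getD 1 0 = 3) ∧
    (a.getD n 0 + a.getD (n + 1) 0 = 1 ∨ a.getD n 0 + a.getD (n + 1) 0 = 2) := by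
  induction n with
  | zero =>
    intro a ha
    simp only [expA, Finset.mem_insert, Finset.mem_singleton] at ha
    rcases ha with rfl | rfl <;>
      refine ⟨rfl, by decide, fun i h1 h2 => by omega, by decide, by decide⟩
  | succ n ih =>
    intro a ha
    have heq : expA (n + 1 + 2) =
        (expA (n + 2)).image (fun a => a.dropLast ++ [a.getLastD 0 + 1, 0]) ∪
        (expA (n + 2)).image (fun a => a ++ [1]) := rfl
    rw [heq, Finset.mem_union, Finset.mem_image, Finset.mem_image] at ha
    rcases ha with ⟨b, hb, rfl⟩ | ⟨b, hb, rfl⟩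
    · obtain ⟨hlen, hlast, hint, hfirst, hend⟩ := ih b hb
      have hdl : b.dropLast.length = n + 1 := by rw [List.length_dropLast, hlen]; omega
      have hgl : b.getLastD 0 = b.getD (n + 1) 0 := by
        rw [getLastD_eq', hlen]
        rfl
      have h1 : ∀ i, i ≤ n → (b.dropLast ++ [b.getLastD 0 + 1, 0]).getD i 0 = b.getD i 0 := by
        intro i hi
        rw [List.getD_append _ _ _ _ (by omega), getD_dropLast' _ _ (by omega)]
      have h2 : (b.dropLast ++ [b.getLastD 0 + 1, 0]).getD (n + 1) 0 = b.getD (n + 1) 0 + 1 := by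
        rw [List.getD_append_right _ _ _ _ (by omega), hdl, hgl]
        simp
      have h3 : (b.dropLast ++ [b.getLastD 0 + 1, 0]).getD (n + 2) 0 = 0 := by
        rw [List.getD_append_right _ _ _ _ (by omega), hdl]
        simp
      refine ⟨by simp [hdl], by rw [show n + 1 + 1 = n + 2 from rfl, h3]; omega, ?_, ?_, ?_⟩
      · intro i hi1 hi2
        rcases Nat.lt_or_ge i (n + 1) with hlt | hge
        · rw [h1 (i - 1) (by omega), h1 i (by omega)]
          exact hint i hi1 (by omega)
        · have hi : i = n + 1 := by omega
          subst hi
          rw [show n + 1 - 1 = n from rfl, h1 n le_rfl, h2]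
          omega
      · rcases Nat.eq_zero_or_pos n with hn | hn
        · subst hn
          rw [h1 0 le_rfl, h2]
          omega
        · rw [h1 0 (by omega), h1 1 (by omega)]
          exact hfirst
      · rw [show n + 1 + 1 = n + 2 from rfl, h2, h3]
        omega
    · obtain ⟨hlen, hlast, hint, hfirst, hend⟩ := ih b hb
      have h1 : ∀ i, i ≤ n + 1 → (b ++ [1]).getD i 0 = b.getD i 0 := by
        intro i hi
        rw [List.getD_append _ _ _ _ (by omega)]
      have h2 : (b ++ [1]).getD (n + 2) 0 = 1 := by
        rw [List.getD_append_right _ _ _ _ (by omega), hlen]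
        simp
      refine ⟨by simp [hlen], by rw [show n + 1 + 1 = n + 2 from rfl, h2], ?_, ?_, ?_⟩
      · intro i hi1 hi2
        rcases Nat.lt_or_ge i (n + 1) with hlt | hge
        · rw [h1 (i - 1) (by omega), h1 i (by omega)]
          exact hint i hi1 (by omega)
        · have hi : i = n + 1 := by omega
          subst hi
          rw [show n + 1 - 1 = n from rfl, h1 n (by omega), h1 (n + 1) le_rfl]
          omega
      · rw [h1 0 (by omega), h1 1 (by omega)]
        exact hfirst
      · rw [show n + 1 + 1 = n + 2 from rfl, h1 (n + 1) le_rfl, h2]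
        omega

theorem pair_sum_constraints (n : ℕ) (hn : 2 ≤ n) (a : List ℕ) (ha : a ∈ expA n) :
    (∀ i, 2 ≤ i → i ≤ n - 2 →
      (a.getD (i - 1) 0 + a.getD i 0 = 1 ∨ a.getD (i - 1) 0 + a.getD i 0 = 2 ∨
        a.getD (i - 1) 0 + a.getD i 0 = 3)) ∧
    (a.getD 0 0 + a.getD 1 0 = 2 ∨ a.getD 0 0 + a.getD 1 0 = 3) ∧
    (a.getD (n - 2) 0 + a.getD (n - 1) 0 = 1 ∨ a.getD (n - 2) 0 + a.getD (n - 1) 0 = 2) := by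
  obtain ⟨m, rfl⟩ : ∃ m, n = m + 2 := ⟨n - 2, by omega⟩
  obtain ⟨_, _, hint, hfirst, hend⟩ := expA_aux m a ha
  refine ⟨?_, hfirst, ?_⟩
  · intro i hi1 hi2
    exact hint i hi1 (by omega)
  · rw [show m + 2 - 2 = m from rfl, show m + 2 - 1 = m + 1 from rfl]
    exact hend
end

section
/- For any a > 0 there exist constants C > 0 and c > 0 (depending on a) such that for all x > 0, Σ_{n≥0} x^n/(n!)^a ≤ C · exp(c · x^{1/a}). -/
lemma pow_div_factorial_le_exp (t : ℝ) (ht : 0 ≤ t) (n : ℕ) :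
    t ^ n / (n.factorial : ℝ) ≤ Real.exp t := by
  refine le_trans ?_ (Real.sum_le_exp_of_nonneg ht (n + 1))
  have : ∀ i ∈ Finset.range (n + 1), 0 ≤ t ^ i / (i.factorial : ℝ) := by
    intro i _
    positivity
  simpa using Finset.single_le_sum this (Finset.self_mem_range_succ n)

theorem mittag_leffler_bound (a : ℝ) (ha : 0 < a) :
    ∃ C > (0 : ℝ), ∃ c > (0 : ℝ), ∀ x : ℝ, 0 < x →
      ∑' n : ℕ, x ^ n / (n.factorial : ℝ) ^ a ≤ C * Real.exp (c * x ^ (1 / a)) := by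
  set r : ℝ := (2 : ℝ) ^ (-a) with hr
  have hr0 : 0 < r := Real.rpow_pos_of_pos (by norm_num) _
  have hr1 : r < 1 := by
    rw [hr]
    calc (2:ℝ) ^ (-a) < (2:ℝ) ^ (0:ℝ) := by
          apply Real.rpow_lt_rpow_left_iff (x := (2:ℝ)) (by norm_num) |>.mpr
          linarith
      _ = 1 := Real.rpow_zero 2
  refine ⟨(1 - r)⁻¹, inv_pos.mpr (by linarith), 2 * a, by positivity, fun x hx => ?_⟩
  set y : ℝ := x ^ (1 / a) with hy
  have hy0 : 0 < y := Real.rpow_pos_of_pos hx _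
  have hyx : y ^ a = x := by
    rw [hy, ← Real.rpow_mul hx.le, one_div, inv_mul_cancel₀ ha.ne', Real.rpow_one]
  -- pointwise bound
  have key : ∀ n : ℕ, x ^ n / (n.factorial : ℝ) ^ a ≤ r ^ n * Real.exp (2 * a * y) := by
    intro n
    have hfac : (0:ℝ) < (n.factorial : ℝ) := by positivity
    have h1 : (2 * y) ^ n / (n.factorial : ℝ) ≤ Real.exp (2 * y) :=
      pow_div_factorial_le_exp _ (by positivity) n
    have h2 : ((2 * y) ^ n / (n.factorial : ℝ)) ^ a ≤ Real.exp (2 * a * y) := by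
      have := Real.rpow_le_rpow (by positivity) h1 ha.le
      rwa [← Real.exp_mul, show 2 * y * a = 2 * a * y by ring] at this
    have heq : x ^ n / (n.factorial : ℝ) ^ a
        = r ^ n * ((2 * y) ^ n / (n.factorial : ℝ)) ^ a := by
      rw [Real.div_rpow (by positivity) hfac.le]
      rw [← Real.rpow_natCast ((2:ℝ)*y) n, ← Real.rpow_natCast r n,
        ← Real.rpow_mul (by positivity : (0:ℝ) ≤ 2*y),
        mul_comm (n:ℝ) a, Real.rpow_mul (by positivity : (0:ℝ) ≤ 2*y),
        Real.mul_rpow (by norm_num) hy0.le, hyx, hr]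
      have hmul : (2:ℝ) ^ (-a) * ((2:ℝ) ^ a * x) = x := by
        rw [← mul_assoc, ← Real.rpow_add (by norm_num : (0:ℝ) < 2), neg_add_cancel,
          Real.rpow_zero, one_mul]
      rw [mul_div_assoc', ← Real.mul_rpow (by positivity) (by positivity), hmul,
        Real.rpow_natCast]
    rw [heq]
    exact mul_le_mul_of_nonneg_left h2 (by positivity)
  have hsum : Summable (fun n : ℕ => r ^ n * Real.exp (2 * a * y)) :=
    (summable_geometric_of_lt_one hr0.le hr1).mul_right _
  have hsumL : Summable (fun n : ℕ => x ^ n / (n.factorial : ℝ) ^ a) := by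
    refine Summable.of_nonneg_of_le (fun n => by positivity) key hsum
  calc ∑' n : ℕ, x ^ n / (n.factorial : ℝ) ^ a
      ≤ ∑' n : ℕ, r ^ n * Real.exp (2 * a * y) := Summable.tsum_le_tsum key hsumL hsum
    _ = (1 - r)⁻¹ * Real.exp (2 * a * y) := by
        rw [tsum_mul_right, tsum_geometric_of_lt_one hr0.le hr1]
    _ = (1 - r)⁻¹ * Real.exp (2 * a * x ^ (1/a)) := by rw [hy]
end

section
/- Let 1/2 < H₀ < 1 and 0 < H < 1/2 with H₀ + H > 3/4. Define, for an exponent vector a ∈ {0,1,2}^n with partial sums Σ_{j=1}^i a_j ∈ {i, i+1} for i < n and Σ_{j=1}^n a_j = n, and α_j = (1-2H)a_j, the quantities α̃₁ = (4H - 3 + α₁)/(4H₀), α̃_j = (4H - 2 + α_{j-1} + α_j)/(4H₀) for 2 ≤ j ≤ n, and β̃_j = -(α_j + 1)/(4H₀). Then α̃₁ > -1, β̃_j > -1 for all j, and Σ_{i=1}^k (α̃_i + β̃_i) + k + 1 + α̃_{k+1} > 0 for all k = 1,…,n-1. -/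
open Finset

theorem integrability_conditions (H₀ H : ℝ) (hH₀ : 1 / 2 < H₀) (hH₀1 : H₀ < 1)
    (hH : 0 < H) (hH1 : H < 1 / 2) (hsum : 3 / 4 < H₀ + H)
    (n : ℕ) (hn : 1 ≤ n) (a : ℕ → ℕ) (ha2 : ∀ j, 1 ≤ j → j ≤ n → a j ≤ 2)
    (hpartial : ∀ i, 1 ≤ i → i < n →
      (∑ j ∈ Finset.Icc 1 i, a j = i ∨ ∑ j ∈ Finset.Icc 1 i, a j = i + 1))
    (htotal : ∑ j ∈ Finset.Icc 1 n, a j = n) :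
    let α : ℕ → ℝ := fun j => (1 - 2 * H) * a j
    let αt : ℕ → ℝ := fun j =>
      if j = 1 then (4 * H - 3 + α 1) / (4 * H₀)
      else (4 * H - 2 + α (j - 1) + α j) / (4 * H₀)
    let βt : ℕ → ℝ := fun j => -(α j + 1) / (4 * H₀)
    (-1 < αt 1) ∧ (∀ j, 1 ≤ j → j ≤ n → -1 < βt j) ∧
      (∀ k, 1 ≤ k → k ≤ n - 1 →
        0 < (∑ i ∈ Finset.Icc 1 k, (αt i + βt i)) + k + 1 + αt (k + 1)) := by
  intro α αt βt
  have hD : (0:ℝ) < 4 * H₀ := by linarith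
  have hα : ∀ j, 0 ≤ α j := by
    intro j
    have h1 : (0:ℝ) ≤ (a j : ℝ) := Nat.cast_nonneg _
    have h2 : (0:ℝ) ≤ 1 - 2 * H := by linarith
    exact mul_nonneg h2 h1
  have hαt1 : αt 1 = (4 * H - 3 + α 1) / (4 * H₀) := by simp [αt]
  have hαt : ∀ j : ℕ, j ≠ 1 → αt j = (4 * H - 2 + α (j - 1) + α j) / (4 * H₀) := by
    intro j hj; simp [αt, hj]
  have hβt : ∀ j : ℕ, βt j = -(α j + 1) / (4 * H₀) := fun j => rfl
  refine ⟨?_, ?_, ?_⟩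
  · rw [hαt1, lt_div_iff₀ hD]
    have := hα 1
    linarith
  · intro j hj1 hj2
    have haj : (a j : ℝ) ≤ 2 := by exact_mod_cast ha2 j hj1 hj2
    have hαj : α j ≤ 2 - 4 * H := by
      have h2 : (0:ℝ) ≤ 1 - 2 * H := by linarith
      have := mul_le_mul_of_nonneg_left haj h2
      simp only [α]; linarith
    rw [hβt, lt_div_iff₀ hD]
    linarith
  · intro k hk1 hk2
    induction k, hk1 using Nat.le_induction with
    | base =>
      have h2 : αt 2 = (4 * H - 2 + α 1 + α 2) / (4 * H₀) := by
        simpa using hαt 2 (by omega)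
      simp only [Finset.Icc_self, Finset.sum_singleton, hαt1, hβt 1, h2]
      have hEq : (4 * H - 3 + α 1) / (4 * H₀) + -(α 1 + 1) / (4 * H₀) + (1:ℕ) + 1
          + (4 * H - 2 + α 1 + α 2) / (4 * H₀)
          = (8 * H - 6 + α 1 + α 2 + 2 * (4 * H₀)) / (4 * H₀) := by
        push_cast
        field_simp
        ring
      rw [hEq, lt_div_iff₀ hD]
      have h1 := hα 1
      have h2' := hα 2
      linarith
    | succ k hk ih =>
      rw [Finset.sum_Icc_succ_top (by omega : 1 ≤ k + 1)]
      have hinc : 0 < βt (k + 1) + 1 + αt (k + 2) := by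
        have h2 : αt (k + 2) = (4 * H - 2 + α (k + 1) + α (k + 2)) / (4 * H₀) := by
          have := hαt (k + 2) (by omega)
          simpa using this
        rw [hβt, h2]
        have hEq : -(α (k + 1) + 1) / (4 * H₀) + 1
            + (4 * H - 2 + α (k + 1) + α (k + 2)) / (4 * H₀)
            = (4 * H₀ + 4 * H - 3 + α (k + 2)) / (4 * H₀) := by
          field_simp; ring
        rw [hEq, lt_div_iff₀ hD]
        have := hα (k + 2)
        linarith
      push_cast
      push_cast at ih
      have ih' := ih (by omega)
      linarith
end
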